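/- The power sum symmetric polynomial p_λ = p_{λ1}·p_{λ2}···p_{λℓ} in n > ℓ variables, where λ = (λ1 ≥ ... ≥ λℓ) is a partition with λ1 ≥ 2, does not have saturated Newton polytope: the point (λ1−1, λ2, ..., λℓ, 1, 0, ..., 0) lies in Newton(p_λ) but is not an exponent vector of p_λ. -/

import Mathlib

open MvPolynomial Finset

/-- The Newton polytope of a multivariate polynomial. -/
noncomputable def Newton {n : ℕ} {R : Type*} [CommSemiring R]
    (f : MvPolynomial (Fin n) R) : Set (Fin n → ℝ) :=
  convexHull ℝ ((fun d : Fin n →₀ ℕ => fun i => (d i : ℝ)) '' ↑f.support)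

/-- `f` has saturated Newton polytope. -/
def SNP {n : ℕ} {R : Type*} [CommSemiring R] (f : MvPolynomial (Fin n) R) : Prop :=
  ∀ α : Fin n →₀ ℕ, (fun i => (α i : ℝ)) ∈ Newton f → coeff α f ≠ 0

lemma aux1 {ℓ n : ℕ} (lam : Fin ℓ → ℕ) (f : Fin ℓ → Fin n) (s : Finset (Fin ℓ)) :
    ∏ i ∈ s, (X (f i) : MvPolynomial (Fin n) ℂ) ^ lam i
      = monomial (∑ i ∈ s, Finsupp.single (f i) (lam i)) 1 := by
  induction s using Finset.induction with
  | empty => simp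
  | insert _ _ h ih =>
    rw [Finset.prod_insert h, Finset.sum_insert h, ih, X_pow_eq_monomial,
      monomial_mul, one_mul]

lemma aux2 {ℓ n : ℕ} (lam : Fin ℓ → ℕ) (α : Fin n →₀ ℕ) :
    coeff α (∏ i : Fin ℓ, ∑ j : Fin n, (X j : MvPolynomial (Fin n) ℂ) ^ lam i)
      = ((univ.filter fun f : Fin ℓ → Fin n =>
          (∑ i : Fin ℓ, Finsupp.single (f i) (lam i)) = α).card : ℂ) := by
  rw [Finset.prod_univ_sum]
  rw [show (∑ f ∈ Fintype.piFinset fun _ : Fin ℓ => (univ : Finset (Fin n)),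
      ∏ i : Fin ℓ, (X (f i) : MvPolynomial (Fin n) ℂ) ^ lam i)
      = ∑ f : Fin ℓ → Fin n, monomial (∑ i : Fin ℓ, Finsupp.single (f i) (lam i)) 1 from
    Finset.sum_congr rfl fun f _ => aux1 lam f univ]
  rw [coeff_sum]
  simp_rw [coeff_monomial]
  rw [Finset.sum_boole]

lemma aux3 {ℓ n : ℕ} (lam : Fin ℓ → ℕ) (f : Fin ℓ → Fin n) (j : Fin n) :
    (∑ i : Fin ℓ, Finsupp.single (f i) (lam i)) j
      = ∑ i : Fin ℓ, if f i = j then lam i else 0 := by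
  rw [Finsupp.finset_sum_apply]
  simp [Finsupp.single_apply]

lemma aux4 {ℓ n : ℕ} (lam : Fin ℓ → ℕ) (f : Fin ℓ → Fin n) (j : Fin n)
    (h : (∑ i : Fin ℓ, Finsupp.single (f i) (lam i)) j ≠ 0) : ∃ i, f i = j := by
  rw [aux3] at h
  obtain ⟨i, _, hi⟩ := Finset.exists_ne_zero_of_sum_ne_zero h
  exact ⟨i, by by_contra hc; simp [hc] at hi⟩

/-- For a partition `λ = (λ1 ≥ ... ≥ λℓ)` with `λ1 ≥ 2` and all parts positive, the
power sum `p_λ` in `n > ℓ` variables is not SNP: the lattice point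
`(λ1 − 1, λ2, ..., λℓ, 1, 0, ..., 0)` lies in `Newton(p_λ)` but has zero coefficient. -/
theorem stmt7 {ℓ n : ℕ} (hl : 0 < ℓ) (hn : ℓ < n)
    (lam : Fin ℓ → ℕ) (hdec : Antitone lam) (hpos : ∀ i, 0 < lam i)
    (h2 : 2 ≤ lam ⟨0, hl⟩)
    (p : MvPolynomial (Fin n) ℂ)
    (hp : p = ∏ i : Fin ℓ, ∑ j : Fin n, X j ^ lam i)
    (β : Fin n → ℕ)
    (hβ : β = fun j : Fin n => if h : (j : ℕ) < ℓ then
        (if (j : ℕ) = 0 then lam ⟨0, hl⟩ - 1 else lam ⟨(j : ℕ), h⟩)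
      else if (j : ℕ) = ℓ then 1 else 0) :
    (fun i => (β i : ℝ)) ∈ Newton p ∧
      coeff (Finsupp.equivFunOnFinite.symm β) p = 0 ∧ ¬ SNP p := by
  set L0 : ℕ := lam ⟨0, hl⟩ with hL0
  set e : Fin ℓ → Fin n := fun i => ⟨i, i.isLt.trans hn⟩ with he
  set f₁ : Fin ℓ → Fin n := fun i => if (i : ℕ) = 0 then ⟨ℓ, hn⟩ else e i with hf₁
  have hev : ∀ i : Fin ℓ, ((e i : Fin n) : ℕ) = i := fun i => rfl
  have hf₁v : ∀ i : Fin ℓ, ((f₁ i : Fin n) : ℕ) = if (i : ℕ) = 0 then ℓ else (i : ℕ) := by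
    intro i; simp only [hf₁, he]; split <;> rfl
  set A : Fin n →₀ ℕ := ∑ i : Fin ℓ, Finsupp.single (e i) (lam i) with hA
  set B : Fin n →₀ ℕ := ∑ i : Fin ℓ, Finsupp.single (f₁ i) (lam i) with hB
  have hAj : ∀ j : Fin n, A j = if h : (j : ℕ) < ℓ then lam ⟨(j : ℕ), h⟩ else 0 := by
    intro j
    rw [hA, aux3]
    by_cases h : (j : ℕ) < ℓ
    · rw [dif_pos h, Finset.sum_eq_single ⟨(j : ℕ), h⟩]
      · rw [if_pos (Fin.ext (hev ⟨(j : ℕ), h⟩))]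
      · intro i _ hi
        rw [if_neg]
        intro hc
        have := congrArg Fin.val hc
        rw [hev] at this
        exact hi (Fin.ext this)
      · simp
    · rw [dif_neg h]
      apply Finset.sum_eq_zero
      intro i _
      rw [if_neg]
      intro hc
      have := congrArg Fin.val hc
      rw [hev] at this
      have := i.isLt
      omega
  have hBj : ∀ j : Fin n, B j =
      if (j : ℕ) = 0 then 0 else if h : (j : ℕ) < ℓ then lam ⟨(j : ℕ), h⟩
      else if (j : ℕ) = ℓ then L0 else 0 := by
    intro j
    rw [hB, aux3]
    by_cases h0 : (j : ℕ) = 0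
    · rw [if_pos h0]
      apply Finset.sum_eq_zero
      intro i _
      rw [if_neg]
      intro hc
      have hv := congrArg Fin.val hc
      rw [hf₁v] at hv
      have hlt := i.isLt
      split at hv <;> omega
    · rw [if_neg h0]
      by_cases h : (j : ℕ) < ℓ
      · rw [dif_pos h, Finset.sum_eq_single ⟨(j : ℕ), h⟩]
        · rw [if_pos]
          apply Fin.ext
          rw [hf₁v]
          simp only [Fin.val_mk]
          rw [if_neg h0]
        · intro i _ hi
          rw [if_neg]
          intro hc
          have hv := congrArg Fin.val hc
          rw [hf₁v] at hv
          apply hi; apply Fin.ext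
          simp only [Fin.val_mk]
          split at hv <;> omega
        · simp
      · rw [dif_neg h]
        by_cases hℓ : (j : ℕ) = ℓ
        · rw [if_pos hℓ, Finset.sum_eq_single ⟨0, hl⟩]
          · rw [if_pos]
            apply Fin.ext
            have hv : ((f₁ ⟨0, hl⟩ : Fin n) : ℕ) = ℓ := by rw [hf₁v]; simp
            rw [hv]
            omega
          · intro i _ hi
            rw [if_neg]
            intro hc
            have hv := congrArg Fin.val hc
            rw [hf₁v] at hv
            have hine : (i : ℕ) ≠ 0 := fun hc0 => hi (Fin.ext hc0)
            have := i.isLt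
            split at hv <;> omega
          · simp
        · rw [if_neg hℓ]
          apply Finset.sum_eq_zero
          intro i _
          rw [if_neg]
          intro hc
          have hv := congrArg Fin.val hc
          rw [hf₁v] at hv
          have := i.isLt
          split at hv <;> omega
  have hcoeff : ∀ α : Fin n →₀ ℕ, coeff α p =
      ((univ.filter fun f : Fin ℓ → Fin n =>
        (∑ i : Fin ℓ, Finsupp.single (f i) (lam i)) = α).card : ℂ) := fun α => by
    rw [hp]; exact aux2 lam α
  have hAsupp : A ∈ p.support := by
    rw [mem_support_iff, hcoeff, Nat.cast_ne_zero]
    exact Finset.card_ne_zero_of_mem (Finset.mem_filter.2 ⟨Finset.mem_univ e, rfl⟩)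
  have hBsupp : B ∈ p.support := by
    rw [mem_support_iff, hcoeff, Nat.cast_ne_zero]
    exact Finset.card_ne_zero_of_mem (Finset.mem_filter.2 ⟨Finset.mem_univ f₁, rfl⟩)
  have hL0pos : (0 : ℝ) < L0 := by
    have : 0 < L0 := by omega
    exact_mod_cast this
  have mem1 : (fun i => (β i : ℝ)) ∈ Newton p := by
    have hsub := segment_subset_convexHull (𝕜 := ℝ)
      (Set.mem_image_of_mem (fun d : Fin n →₀ ℕ => fun i => (d i : ℝ))
        (Finset.mem_coe.2 hAsupp))
      (Set.mem_image_of_mem (fun d : Fin n →₀ ℕ => fun i => (d i : ℝ))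
        (Finset.mem_coe.2 hBsupp))
    apply hsub
    refine ⟨((L0 : ℝ) - 1) / L0, 1 / L0, ?_, by positivity, by field_simp; ring, ?_⟩
    · apply div_nonneg _ hL0pos.le
      have : (1 : ℝ) ≤ L0 := by exact_mod_cast (by omega : 1 ≤ L0)
      linarith
    funext j
    simp only [Pi.add_apply, Pi.smul_apply, smul_eq_mul]
    rw [hAj j, hBj j]
    simp only [hβ]
    have hL0ne : (L0 : ℝ) ≠ 0 := hL0pos.ne'
    by_cases h0 : (j : ℕ) = 0
    · have h : (j : ℕ) < ℓ := h0 ▸ hl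
      rw [dif_pos h, if_pos h0, dif_pos h, if_pos h0]
      have heq : (⟨(j : ℕ), h⟩ : Fin ℓ) = ⟨0, hl⟩ := Fin.ext h0
      rw [heq]
      have hc : ((L0 - 1 : ℕ) : ℝ) = (L0 : ℝ) - 1 := by
        rw [Nat.cast_sub (by omega)]; simp
      rw [hc]
      field_simp
      rw [← hL0]
      push_cast
      ring
    · by_cases h : (j : ℕ) < ℓ
      · rw [if_neg h0, dif_pos h, dif_pos h, dif_pos h, if_neg h0]
        field_simp
        ring
      · by_cases hℓ : (j : ℕ) = ℓ
        · rw [if_neg h0, dif_neg h, dif_neg h, dif_neg h, if_pos hℓ, if_pos hℓ]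
          push_cast
          field_simp
          ring
        · rw [if_neg h0, dif_neg h, dif_neg h, dif_neg h, if_neg hℓ, if_neg hℓ]
          simp
  have mem2 : coeff (Finsupp.equivFunOnFinite.symm β) p = 0 := by
    rw [hcoeff, Nat.cast_eq_zero, Finset.card_eq_zero, Finset.filter_eq_empty_iff]
    intro f _ hf
    set g : Fin (ℓ + 1) → Fin n := fun k => ⟨k, by omega⟩ with hg
    have hβne : ∀ k : Fin (ℓ + 1), β (g k) ≠ 0 := by
      intro k
      rw [hβ]
      simp only [hg]
      by_cases h : (k : ℕ) < ℓ
      · rw [dif_pos h]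
        by_cases h0 : (k : ℕ) = 0
        · rw [if_pos h0]; omega
        · rw [if_neg h0]; exact (hpos _).ne'
      · have hk : (k : ℕ) = ℓ := by have := k.isLt; omega
        rw [dif_neg h, if_pos hk]; exact one_ne_zero
    have hrange : ∀ k : Fin (ℓ + 1), ∃ i, f i = g k := by
      intro k
      apply aux4 lam f
      rw [hf]
      exact hβne k
    have hginj : Function.Injective g := fun a b hab => by
      simpa [hg, Fin.ext_iff] using hab
    have hsub : Finset.image g univ ⊆ Finset.image f univ := by
      intro x hx
      obtain ⟨k, _, hk⟩ := Finset.mem_image.1 hx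
      obtain ⟨i, hi⟩ := hrange k
      exact Finset.mem_image.2 ⟨i, Finset.mem_univ _, hk ▸ hi⟩
    have h1 : ℓ + 1 ≤ (Finset.image f univ).card := by
      calc ℓ + 1 = (Finset.image g univ).card := by
            rw [Finset.card_image_of_injective _ hginj, Finset.card_univ, Fintype.card_fin]
        _ ≤ _ := Finset.card_le_card hsub
    have h2' : (Finset.image f univ).card ≤ ℓ := by
      calc (Finset.image f univ).card ≤ (univ : Finset (Fin ℓ)).card := Finset.card_image_le
        _ = ℓ := by rw [Finset.card_univ, Fintype.card_fin]
    omega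
  exact ⟨mem1, mem2, fun hsnp => hsnp (Finsupp.equivFunOnFinite.symm β) mem1 mem2⟩
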